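/- Let a ∈ (0,1), β ≥ 1, λ > 6 with a - 2/β - 2a/λ > 0, and let α ∈ ℝ. Then for every sufficiently small r > 0, the integral over the polydisk Δ_r³ ⊂ ℂ³ of 1/( ((|z₁|+|z₂|^β)^a + |z₃|^λ) · |z₁|² · (-log|z₁|)^α ) with respect to 6-dimensional Lebesgue measure is +∞. -/

import Mathlib

open MeasureTheory Complex Real
open scoped ENNReal NNReal

noncomputable section

/-- Let `a ∈ (0,1)`, `β ≥ 1`, `λ > 6` with `a - 2/β - 2a/λ > 0`, and `α ∈ ℝ`. Then for every
sufficiently small `r > 0`, the integral over the polydisk `Δ_r³ ⊂ ℂ³` of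
`1/(((|z₁|+|z₂|^β)^a + |z₃|^λ)·|z₁|²·(-log|z₁|)^α)` is `+∞`. -/
theorem adjoint_ideal_stmt6 (a β lam α : ℝ) (ha0 : 0 < a) (ha1 : a < 1) (hβ : 1 ≤ β)
    (hlam : 6 < lam) (hexp : 0 < a - 2 / β - 2 * a / lam) :
    ∃ r₀ > 0, ∀ r : ℝ, 0 < r → r < r₀ →
      ∫⁻ z in {z : Fin 3 → ℂ | ∀ i, ‖z i‖ < r},
        ENNReal.ofReal (1 /
          (((‖z 0‖ + ‖z 1‖ ^ β) ^ a + ‖z 2‖ ^ lam) *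
            ‖z 0‖ ^ 2 * (-Real.log (‖z 0‖)) ^ α)) = ⊤ := by
  have hβ0 : (0:ℝ) < β := lt_of_lt_of_le one_pos hβ
  have hlam0 : (0:ℝ) < lam := by linarith
  obtain ⟨δ, hδ_def⟩ : ∃ δ : ℝ, δ = (a - 2 / β - 2 * a / lam) / 2 :=
    ⟨_, rfl⟩
  have hδ0 : 0 < δ := by rw [hδ_def]; linarith
  have hδa : δ < a := by
    have h1 : 0 < 2 / β := by positivity
    have h2 : 0 < 2 * a / lam := by positivity
    rw [hδ_def]; linarith
  -- the logarithm bound near 0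
  obtain ⟨r₁, hr₁0, hr₁1, hlog⟩ :
      ∃ r₁ : ℝ, 0 < r₁ ∧ r₁ < 1 ∧ ∀ t : ℝ, 0 < t → t < r₁ →
        (-Real.log t) ^ α ≤ t ^ (-δ) := by
    rcases le_or_gt α 0 with hα | hα
    · refine ⟨Real.exp (-1), Real.exp_pos _, Real.exp_lt_one_iff.2 (by norm_num),
        fun t ht0 htr => ?_⟩
      have hlt : Real.log t < -1 := by
        have := Real.log_lt_log ht0 htr
        rwa [Real.log_exp] at this
      have h1 : (1:ℝ) ≤ -Real.log t := by linarith
      have h2 : (-Real.log t) ^ α ≤ 1 := Real.rpow_le_one_of_one_le_of_nonpos h1 hα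
      have ht1 : t ≤ 1 := by
        have := Real.exp_lt_one_iff.2 (show (-1:ℝ) < 0 by norm_num)
        linarith
      exact h2.trans (Real.one_le_rpow_of_pos_of_le_one_of_nonpos ht0 ht1 (by linarith))
    · obtain ⟨c, hc_def⟩ : ∃ c : ℝ, c = δ / (2 * α) := ⟨_, rfl⟩
      have hc0 : 0 < c := by rw [hc_def]; positivity
      refine ⟨min (Real.exp (-1)) ((c ^ α) ^ (2 / δ)),
        lt_min (Real.exp_pos _) (by positivity),
        lt_of_le_of_lt (min_le_left _ _) (Real.exp_lt_one_iff.2 (by norm_num)),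
        fun t ht0 htr => ?_⟩
      have hte : t < Real.exp (-1) := htr.trans_le (min_le_left _ _)
      have htc : t ≤ (c ^ α) ^ (2 / δ) := (htr.trans_le (min_le_right _ _)).le
      have hlt : Real.log t < -1 := by
        have := Real.log_lt_log ht0 hte; rwa [Real.log_exp] at this
      have hlog0 : (0:ℝ) ≤ -Real.log t := by linarith
      have h1 : -Real.log t ≤ t⁻¹ ^ c / c := by
        rw [← Real.log_inv]
        exact Real.log_le_rpow_div (inv_nonneg.2 ht0.le) hc0
      have h2 : (-Real.log t) ^ α ≤ (t⁻¹ ^ c / c) ^ α :=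
        Real.rpow_le_rpow hlog0 h1 hα.le
      have h3 : (t⁻¹ ^ c / c) ^ α = t ^ (-(δ/2)) / c ^ α := by
        rw [Real.div_rpow (Real.rpow_nonneg (inv_nonneg.2 ht0.le) _) hc0.le,
          Real.inv_rpow ht0.le, ← Real.rpow_neg ht0.le, ← Real.rpow_mul ht0.le]
        congr 2
        rw [hc_def]
        field_simp
      have h4 : t ^ (δ/2) ≤ c ^ α := by
        calc t ^ (δ/2) ≤ ((c ^ α) ^ (2/δ)) ^ (δ/2) :=
              Real.rpow_le_rpow ht0.le htc (by positivity)
        _ = c ^ α := by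
            rw [← Real.rpow_mul (by positivity : (0:ℝ) ≤ c ^ α),
              show (2/δ) * (δ/2) = 1 by field_simp, Real.rpow_one]
      have h5 : t ^ (-(δ/2)) / c ^ α ≤ t ^ (-δ) := by
        rw [div_le_iff₀ (by positivity : (0:ℝ) < c ^ α)]
        calc t ^ (-(δ/2)) = t ^ (-δ) * t ^ (δ/2) := by
              rw [← Real.rpow_add ht0]; ring_nf
        _ ≤ t ^ (-δ) * c ^ α :=
              mul_le_mul_of_nonneg_left h4 (Real.rpow_nonneg ht0.le _)
      calc (-Real.log t) ^ α ≤ (t⁻¹ ^ c / c) ^ α := h2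
      _ = t ^ (-(δ/2)) / c ^ α := h3
      _ ≤ t ^ (-δ) := h5
  -- a general divergence principle
  have main : ∀ (J : ℝ≥0∞) (ρ : ℝ), 0 < ρ →
      (∀ n : ℕ, ENNReal.ofReal ((2:ℝ) ^ (δ - a - 2) * (ρ / 2 ^ (n+1)) ^ (-δ)) ≤ J) →
      J = ⊤ := by
    intro J ρ hρ0 hJ
    by_contra hI
    have hT : ∀ n : ℕ, (2:ℝ) ^ (δ - a - 2) * (ρ / 2 ^ (n+1)) ^ (-δ) ≤ J.toReal := fun n =>
      (ENNReal.ofReal_le_iff_le_toReal hI).1 (hJ n)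
    have hrw : ∀ n : ℕ, (ρ / 2 ^ (n+1)) ^ (-δ) = ρ ^ (-δ) * ((2:ℝ) ^ δ) ^ (n+1) := by
      intro n
      rw [Real.div_rpow hρ0.le (by positivity), Real.rpow_neg
        (by positivity : (0:ℝ) ≤ (2:ℝ) ^ (n+1)), div_eq_mul_inv, inv_inv]
      congr 1
      rw [← Real.rpow_natCast (2:ℝ) (n+1), ← Real.rpow_mul (by norm_num : (0:ℝ) ≤ 2),
        ← Real.rpow_natCast ((2:ℝ) ^ δ) (n+1), ← Real.rpow_mul (by norm_num : (0:ℝ) ≤ 2)]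
      rw [mul_comm]
    have hb : 1 < (2:ℝ) ^ δ :=
      (Real.one_lt_rpow_iff_of_pos (by norm_num)).2 (Or.inl ⟨one_lt_two, hδ0⟩)
    have hX0 : (0:ℝ) < (2:ℝ) ^ (δ - a - 2) := Real.rpow_pos_of_pos (by norm_num) _
    have hY0 : (0:ℝ) < ρ ^ δ := Real.rpow_pos_of_pos hρ0 _
    have hρneg : ρ ^ (-δ) = (ρ ^ δ)⁻¹ := Real.rpow_neg hρ0.le δ
    obtain ⟨n, hn⟩ := ((tendsto_pow_atTop_atTop_of_one_lt hb).eventually_gt_atTop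
      (J.toReal * (ρ ^ δ) / ((2:ℝ) ^ (δ - a - 2)))).exists
    have hmain := hT n
    rw [hrw n, hρneg] at hmain
    have hble : ((2:ℝ) ^ δ) ^ n ≤ ((2:ℝ) ^ δ) ^ (n+1) :=
      pow_le_pow_right₀ hb.le (Nat.le_succ n)
    have h1 : J.toReal * (ρ ^ δ) / ((2:ℝ) ^ (δ - a - 2)) < ((2:ℝ) ^ δ) ^ n := hn
    have h3 : J.toReal < (2:ℝ) ^ (δ - a - 2) * ((ρ ^ δ)⁻¹ * ((2:ℝ) ^ δ) ^ n) := by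
      rw [div_lt_iff₀ hX0] at h1
      rw [← lt_div_iff₀ hY0] at h1
      calc J.toReal < ((2:ℝ) ^ δ) ^ n * (2:ℝ) ^ (δ - a - 2) / (ρ ^ δ) := h1
      _ = (2:ℝ) ^ (δ - a - 2) * ((ρ ^ δ)⁻¹ * ((2:ℝ) ^ δ) ^ n) := by
          field_simp
    have h2 : (2:ℝ) ^ (δ - a - 2) * ((ρ ^ δ)⁻¹ * ((2:ℝ) ^ δ) ^ n)
        ≤ (2:ℝ) ^ (δ - a - 2) * ((ρ ^ δ)⁻¹ * ((2:ℝ) ^ δ) ^ (n+1)) := by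
      apply mul_le_mul_of_nonneg_left _ hX0.le
      exact mul_le_mul_of_nonneg_left hble (inv_nonneg.2 hY0.le)
    linarith
  -- choose r₀
  refine ⟨min r₁ (1/2), lt_min hr₁0 (by norm_num), fun r hr0 hrr₀ => ?_⟩
  have hr_half : r < 1/2 := hrr₀.trans_le (min_le_right _ _)
  have hr1 : r < 1 := by linarith
  have hrr₁ : r < r₁ := hrr₀.trans_le (min_le_left _ _)
  obtain ⟨M, hM_def⟩ : ∃ M : ℝ, M = β + lam / a := ⟨_, rfl⟩
  have hM1 : 1 ≤ M := by
    have : (0:ℝ) ≤ lam / a := by positivity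
    rw [hM_def]; linarith
  have hMβ : 1 ≤ M / β := by
    rw [one_le_div hβ0]
    have : (0:ℝ) ≤ lam / a := by positivity
    rw [hM_def]; linarith
  have hMa : M * a = β * a + lam := by
    rw [hM_def, add_mul, div_mul_cancel₀ _ (ne_of_gt ha0)]
  have hMal : 1 ≤ M * a / lam := by
    rw [one_le_div hlam0, hMa]
    nlinarith [mul_pos hβ0 ha0]
  obtain ⟨ρ, hρ_def⟩ : ∃ ρ : ℝ, ρ = r ^ M := ⟨_, rfl⟩
  have hρ0 : 0 < ρ := hρ_def ▸ Real.rpow_pos_of_pos hr0 M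
  have hρr : ρ ≤ r := by
    calc ρ = r ^ M := hρ_def
    _ ≤ r ^ (1:ℝ) := Real.rpow_le_rpow_of_exponent_ge hr0 hr1.le hM1
    _ = r := Real.rpow_one r
  -- the key lower bound for each n
  apply main _ ρ hρ0
  intro n
  obtain ⟨t₀, ht₀_def⟩ : ∃ t₀ : ℝ, t₀ = ρ / 2 ^ (n+1) := ⟨_, rfl⟩
  rw [← ht₀_def]
  have ht₀0 : 0 < t₀ := by rw [ht₀_def]; positivity
  have h2t₀ : 2 * t₀ ≤ ρ := by
    have he : (2:ℝ) * (ρ / 2 ^ (n+1)) = ρ / 2 ^ n := by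
      rw [pow_succ]; field_simp
    rw [ht₀_def, he]
    exact div_le_self hρ0.le (one_le_pow₀ (by norm_num))
  have ht₀ρ : t₀ ≤ ρ := by linarith
  obtain ⟨A, hA_def⟩ : ∃ A : Set ℂ,
    A = Metric.ball (0:ℂ) (2*t₀) \ Metric.closedBall (0:ℂ) t₀ := ⟨_, rfl⟩
  obtain ⟨B, hB_def⟩ : ∃ B : Set ℂ, B = Metric.ball (0:ℂ) (t₀ ^ (1/β)) := ⟨_, rfl⟩
  obtain ⟨C, hC_def⟩ : ∃ C : Set ℂ, C = Metric.ball (0:ℂ) (t₀ ^ (a/lam)) := ⟨_, rfl⟩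
  obtain ⟨E, hE_def⟩ : ∃ E : Set (Fin 3 → ℂ), E = Set.pi Set.univ ![A, B, C] := ⟨_, rfl⟩
  have hmeasE : MeasurableSet E := by
    rw [hE_def]
    apply MeasurableSet.univ_pi
    intro i
    fin_cases i
    · exact hA_def ▸ measurableSet_ball.diff measurableSet_closedBall
    · exact hB_def ▸ measurableSet_ball
    · exact hC_def ▸ measurableSet_ball
  have hmem : ∀ z ∈ E, z 0 ∈ A ∧ z 1 ∈ B ∧ z 2 ∈ C := by
    intro z hz
    rw [hE_def, Set.mem_univ_pi] at hz
    exact ⟨hz 0, hz 1, hz 2⟩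
  have hsub : E ⊆ {z : Fin 3 → ℂ | ∀ i, ‖z i‖ < r} := by
    intro z hz
    obtain ⟨h0, h1, h2⟩ := hmem z hz
    rw [hA_def] at h0; rw [hB_def] at h1; rw [hC_def] at h2
    intro i
    fin_cases i
    · have hb : ‖z 0‖ < 2 * t₀ := mem_ball_zero_iff.1 h0.1
      calc ‖z 0‖ = ‖z 0‖ := rfl
      _ < 2 * t₀ := hb
      _ ≤ ρ := h2t₀
      _ ≤ r := hρr
    · have hb : ‖z 1‖ < t₀ ^ (1/β) := mem_ball_zero_iff.1 h1
      calc ‖z 1‖ = ‖z 1‖ := rfl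
      _ < t₀ ^ (1/β) := hb
      _ ≤ ρ ^ (1/β) := Real.rpow_le_rpow ht₀0.le ht₀ρ (by positivity)
      _ = r ^ (M * (1/β)) := by rw [hρ_def, ← Real.rpow_mul hr0.le]
      _ ≤ r ^ (1:ℝ) := Real.rpow_le_rpow_of_exponent_ge hr0 hr1.le
            (by rw [mul_one_div]; exact hMβ)
      _ = r := Real.rpow_one r
    · have hb : ‖z 2‖ < t₀ ^ (a/lam) := mem_ball_zero_iff.1 h2
      calc ‖z 2‖ = ‖z 2‖ := rfl
      _ < t₀ ^ (a/lam) := hb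
      _ ≤ ρ ^ (a/lam) := Real.rpow_le_rpow ht₀0.le ht₀ρ (by positivity)
      _ = r ^ (M * (a/lam)) := by rw [hρ_def, ← Real.rpow_mul hr0.le]
      _ ≤ r ^ (1:ℝ) := Real.rpow_le_rpow_of_exponent_ge hr0 hr1.le
            (by rw [← mul_div_assoc]; exact hMal)
      _ = r := Real.rpow_one r
  -- the pointwise lower bound on E
  obtain ⟨cst, hcst_def⟩ : ∃ cst : ℝ, cst = (1/3) * (2*t₀) ^ (δ - a - 2) := ⟨_, rfl⟩
  have hkey : ∀ z ∈ E, ENNReal.ofReal cst ≤ ENNReal.ofReal (1 /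
      (((‖z 0‖ + ‖z 1‖ ^ β) ^ a + ‖z 2‖ ^ lam) *
        ‖z 0‖ ^ 2 * (-Real.log (‖z 0‖)) ^ α)) := by
    intro z hz
    obtain ⟨h0, h1, h2⟩ := hmem z hz
    rw [hA_def] at h0; rw [hB_def] at h1; rw [hC_def] at h2
    obtain ⟨t, ht_def⟩ : ∃ t : ℝ, t = ‖z 0‖ := ⟨_, rfl⟩
    rw [← ht_def]
    have ht_hi : t < 2 * t₀ := by
      rw [ht_def]; exact mem_ball_zero_iff.1 h0.1
    have ht_lo : t₀ < t := by
      have := h0.2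
      rw [Metric.mem_closedBall, dist_zero_right] at this
      rw [ht_def]; exact not_le.1 this
    have ht0 : 0 < t := ht₀0.trans ht_lo
    have htr₁ : t < r₁ := by
      calc t < 2 * t₀ := ht_hi
      _ ≤ ρ := h2t₀
      _ ≤ r := hρr
      _ < r₁ := hrr₁
    have ht1 : t < 1 := htr₁.trans hr₁1
    have hlogt : 0 < -Real.log t := by
      have := Real.log_neg ht0 ht1; linarith
    have hz1b : ‖z 1‖ ^ β ≤ t₀ := by
      have hb : ‖z 1‖ < t₀ ^ (1/β) := mem_ball_zero_iff.1 h1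
      calc ‖z 1‖ ^ β ≤ (t₀ ^ (1/β)) ^ β :=
            Real.rpow_le_rpow (norm_nonneg _) hb.le hβ0.le
      _ = t₀ := by
          rw [← Real.rpow_mul ht₀0.le, one_div_mul_cancel (ne_of_gt hβ0), Real.rpow_one]
    have hz2b : ‖z 2‖ ^ lam ≤ t₀ ^ a := by
      have hb : ‖z 2‖ < t₀ ^ (a/lam) := mem_ball_zero_iff.1 h2
      calc ‖z 2‖ ^ lam ≤ (t₀ ^ (a/lam)) ^ lam :=
            Real.rpow_le_rpow (norm_nonneg _) hb.le hlam0.le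
      _ = t₀ ^ a := by
          rw [← Real.rpow_mul ht₀0.le, div_mul_cancel₀ _ (ne_of_gt hlam0)]
    have hS : (t + ‖z 1‖ ^ β) ^ a + ‖z 2‖ ^ lam
        ≤ 3 * t ^ (a:ℝ) := by
      have e1 : t + ‖z 1‖ ^ β ≤ 2 * t := by linarith
      have e2 : (t + ‖z 1‖ ^ β) ^ a ≤ (2*t) ^ a := by
        apply Real.rpow_le_rpow _ e1 ha0.le
        have := Real.rpow_nonneg (norm_nonneg (z 1)) β
        linarith
      have e3 : ((2:ℝ)*t) ^ a = 2 ^ a * t ^ a := Real.mul_rpow (by norm_num) ht0.le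
      have e4 : (2:ℝ) ^ a ≤ 2 := by
        calc (2:ℝ) ^ a ≤ 2 ^ (1:ℝ) :=
              Real.rpow_le_rpow_of_exponent_le (by norm_num) ha1.le
        _ = 2 := Real.rpow_one 2
      have e5 : t₀ ^ a ≤ t ^ a := Real.rpow_le_rpow ht₀0.le ht_lo.le ha0.le
      have e6 : (0:ℝ) ≤ t ^ a := Real.rpow_nonneg ht0.le a
      have e7 : (2:ℝ) ^ a * t ^ a ≤ 2 * t ^ a := mul_le_mul_of_nonneg_right e4 e6
      rw [e3] at e2
      linarith
    have hlogb : (-Real.log t) ^ α ≤ t ^ (-δ) := hlog t ht0 htr₁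
    have hSpos : 0 < (t + ‖z 1‖ ^ β) ^ a + ‖z 2‖ ^ lam := by
      apply add_pos_of_pos_of_nonneg
      · apply Real.rpow_pos_of_pos
        have := Real.rpow_nonneg (norm_nonneg (z 1)) β
        linarith
      · exact Real.rpow_nonneg (norm_nonneg _) lam
    have hDpos : 0 < ((t + ‖z 1‖ ^ β) ^ a + ‖z 2‖ ^ lam) *
        t ^ 2 * (-Real.log t) ^ α := by
      apply mul_pos (mul_pos hSpos (by positivity))
      exact Real.rpow_pos_of_pos hlogt α
    have ht2 : (t:ℝ) ^ (2:ℕ) = t ^ ((2:ℝ)) := by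
      rw [← Real.rpow_natCast t 2]; norm_num
    have hD_le : ((t + ‖z 1‖ ^ β) ^ a + ‖z 2‖ ^ lam) *
        t ^ 2 * (-Real.log t) ^ α ≤ 3 * t ^ (a + 2 - δ) := by
      calc ((t + ‖z 1‖ ^ β) ^ a + ‖z 2‖ ^ lam) *
          t ^ 2 * (-Real.log t) ^ α
          ≤ (3 * t ^ (a:ℝ)) * t ^ (2:ℕ) * (t ^ (-δ)) := by
            apply mul_le_mul (mul_le_mul hS le_rfl (by positivity) (by positivity))
              hlogb (le_of_lt (Real.rpow_pos_of_pos hlogt α)) (by positivity)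
      _ = 3 * t ^ (a + 2 - δ) := by
            rw [ht2, show (3 * t ^ (a:ℝ)) * t ^ ((2:ℝ)) * (t ^ (-δ))
                = 3 * (t ^ (a:ℝ) * t ^ ((2:ℝ)) * t ^ (-δ)) from by ring,
              ← Real.rpow_add ht0, ← Real.rpow_add ht0,
              show a + (2:ℝ) + -δ = a + 2 - δ from by ring]
    have hexp_pos : (0:ℝ) < a + 2 - δ := by linarith
    have hmono : t ^ (a + 2 - δ) ≤ (2*t₀) ^ (a + 2 - δ) :=
      Real.rpow_le_rpow ht0.le ht_hi.le hexp_pos.le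
    have hstep1 : 1 / (3 * t ^ (a + 2 - δ)) ≤ 1 /
        (((t + ‖z 1‖ ^ β) ^ a + ‖z 2‖ ^ lam) *
          t ^ 2 * (-Real.log t) ^ α) := by
      apply one_div_le_one_div_of_le hDpos hD_le
    have hstep2 : 1 / (3 * (2*t₀) ^ (a + 2 - δ)) ≤ 1 / (3 * t ^ (a + 2 - δ)) :=
      one_div_le_one_div_of_le (by positivity) (by linarith)
    have heq : cst = 1 / (3 * (2*t₀) ^ (a + 2 - δ)) := by
      rw [hcst_def, show δ - a - 2 = -(a + 2 - δ) by ring,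
        Real.rpow_neg (by positivity)]
      field_simp
    apply ENNReal.ofReal_le_ofReal
    rw [heq]
    linarith
  -- volume lower bounds
  have hpi1 : (1:ℝ≥0∞) ≤ (NNReal.pi : ℝ≥0∞) := by
    rw [← ENNReal.coe_one, ENNReal.coe_le_coe, ← NNReal.coe_le_coe,
      NNReal.coe_one, NNReal.coe_real_pi]
    linarith [Real.pi_gt_three]
  have hvA : ENNReal.ofReal (3 * t₀ ^ 2) ≤ volume A := by
    rw [hA_def]
    have hd : volume (Metric.ball (0:ℂ) (2*t₀)) - volume (Metric.closedBall (0:ℂ) t₀)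
        ≤ volume (Metric.ball (0:ℂ) (2*t₀) \ Metric.closedBall (0:ℂ) t₀) :=
      le_measure_diff
    refine le_trans ?_ hd
    rw [Complex.volume_ball, Complex.volume_closedBall,
      ← ENNReal.ofReal_pow (by positivity), ← ENNReal.ofReal_pow ht₀0.le,
      ← ENNReal.sub_mul (fun _ _ => ENNReal.coe_ne_top),
      ← ENNReal.ofReal_sub _ (by positivity),
      show (2*t₀)^2 - t₀^2 = 3 * t₀^2 by ring]
    exact le_mul_of_one_le_right zero_le hpi1
  have hvB : ENNReal.ofReal (t₀ ^ (2/β)) ≤ volume B := by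
    rw [hB_def, Complex.volume_ball, ← ENNReal.ofReal_pow (by positivity)]
    have h : (t₀ ^ (1/β)) ^ (2:ℕ) = t₀ ^ (2/β) := by
      rw [← Real.rpow_natCast (t₀ ^ (1/β)) 2, ← Real.rpow_mul ht₀0.le]
      congr 1
      push_cast
      ring
    rw [h]
    exact le_mul_of_one_le_right zero_le hpi1
  have hvC : ENNReal.ofReal (t₀ ^ (2*a/lam)) ≤ volume C := by
    rw [hC_def, Complex.volume_ball, ← ENNReal.ofReal_pow (by positivity)]
    have h : (t₀ ^ (a/lam)) ^ (2:ℕ) = t₀ ^ (2*a/lam) := by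
      rw [← Real.rpow_natCast (t₀ ^ (a/lam)) 2, ← Real.rpow_mul ht₀0.le]
      congr 1
      push_cast
      ring
    rw [h]
    exact le_mul_of_one_le_right zero_le hpi1
  have hvE : ENNReal.ofReal (3 * t₀ ^ (2 + 2/β + 2*a/lam)) ≤ volume E := by
    have hEeq : volume E = volume A * (volume B * volume C) := by
      rw [hE_def, volume_pi_pi, Fin.prod_univ_three]
      simp [mul_assoc]
    rw [hEeq]
    have hcomb : ENNReal.ofReal (3 * t₀ ^ (2 + 2/β + 2*a/lam)) =
        ENNReal.ofReal (3 * t₀ ^ 2) *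
          (ENNReal.ofReal (t₀ ^ (2/β)) * ENNReal.ofReal (t₀ ^ (2*a/lam))) := by
      rw [← ENNReal.ofReal_mul (by positivity), ← ENNReal.ofReal_mul (by positivity)]
      congr 1
      have h2 : (t₀:ℝ) ^ (2:ℕ) = t₀ ^ ((2:ℝ)) := by
        rw [← Real.rpow_natCast t₀ 2]; norm_num
      rw [mul_assoc, h2, ← Real.rpow_add ht₀0, ← Real.rpow_add ht₀0,
        show (2:ℝ) + (2/β + 2*a/lam) = 2 + 2/β + 2*a/lam from by ring]
    rw [hcomb]
    exact mul_le_mul' hvA (mul_le_mul' hvB hvC)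
  -- put everything together
  have hIE : ENNReal.ofReal cst * volume E ≤
      ∫⁻ z in {z : Fin 3 → ℂ | ∀ i, ‖z i‖ < r},
        ENNReal.ofReal (1 /
          (((‖z 0‖ + ‖z 1‖ ^ β) ^ a + ‖z 2‖ ^ lam) *
            ‖z 0‖ ^ 2 * (-Real.log (‖z 0‖)) ^ α)) := by
    calc ENNReal.ofReal cst * volume E = ∫⁻ _ in E, ENNReal.ofReal cst :=
          (setLIntegral_const E _).symm
    _ ≤ ∫⁻ z in E, ENNReal.ofReal (1 /
          (((‖z 0‖ + ‖z 1‖ ^ β) ^ a + ‖z 2‖ ^ lam) *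
            ‖z 0‖ ^ 2 * (-Real.log (‖z 0‖)) ^ α)) :=
          setLIntegral_mono' hmeasE hkey
    _ ≤ _ := lintegral_mono_set hsub
  refine le_trans ?_ hIE
  have hprod : ENNReal.ofReal cst * ENNReal.ofReal (3 * t₀ ^ (2 + 2/β + 2*a/lam))
      = ENNReal.ofReal ((2:ℝ) ^ (δ - a - 2) * t₀ ^ (-δ)) := by
    rw [← ENNReal.ofReal_mul (by rw [hcst_def]; positivity)]
    congr 1
    rw [hcst_def, Real.mul_rpow (by norm_num : (0:ℝ) ≤ 2) ht₀0.le,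
      show (1:ℝ)/3 * ((2:ℝ) ^ (δ - a - 2) * t₀ ^ (δ - a - 2)) *
          (3 * t₀ ^ (2 + 2/β + 2*a/lam))
        = (2:ℝ) ^ (δ - a - 2) * (t₀ ^ (δ - a - 2) * t₀ ^ (2 + 2/β + 2*a/lam))
        from by ring,
      ← Real.rpow_add ht₀0,
      show δ - a - 2 + (2 + 2/β + 2*a/lam) = -δ from by rw [hδ_def]; ring]
  calc ENNReal.ofReal ((2:ℝ) ^ (δ - a - 2) * t₀ ^ (-δ))
      = ENNReal.ofReal cst * ENNReal.ofReal (3 * t₀ ^ (2 + 2/β + 2*a/lam)) := hprod.symm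
  _ ≤ ENNReal.ofReal cst * volume E := mul_le_mul_right hvE _
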